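/- A permutation π is sorted by one pass of stack-sort, i.e., S(π) is the identity permutation, if and only if π avoids the classical pattern 231. -/

import Mathlib

/-- Pop from the stack (top first) all letters smaller than `x`;
returns (popped output, remaining stack). -/
def stackPop (x : ℕ) : List ℕ → List ℕ × List ℕ
  | [] => ([], [])
  | t :: ts =>
    if t < x then
      let p := stackPop x ts
      (t :: p.1, p.2)
    else ([], t :: ts)

/-- Run the stack-sorting procedure with the given stack and input;
at the end the (increasing) stack is flushed to the output. -/
def stackRun : List ℕ → List ℕ → List ℕ
  | stack, [] => stack
  | stack, x :: xs =>
    let p := stackPop x stack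
    p.1 ++ stackRun (x :: p.2) xs

/-- The stack-sort operator: one pass of a permutation (word) through a stack. -/
def S (w : List ℕ) : List ℕ := stackRun [] w

/-- `w` is (the one-line notation of) a permutation of `{1, …, n}`. -/
def IsPermOf (w : List ℕ) (n : ℕ) : Prop := w.Perm (List.range' 1 n)

/-- The identity permutation `1 2 ⋯ n` in one-line notation. -/
def idPerm (n : ℕ) : List ℕ := List.range' 1 n

/-- `w` contains the classical pattern 231. -/
def Contains231 (w : List ℕ) : Prop :=
  ∃ i j k : Fin w.length, i < j ∧ j < k ∧ w.get k < w.get i ∧ w.get i < w.get j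

lemma stackPop_eq (x : ℕ) (σ : List ℕ) :
    stackPop x σ = (σ.takeWhile (· < x), σ.dropWhile (· < x)) := by
  induction σ with
  | nil => rfl
  | cons t ts ih =>
    by_cases h : t < x <;>
      simp [stackPop, List.takeWhile_cons, List.dropWhile_cons, h, ih]

lemma stackRun_nil (σ : List ℕ) : stackRun σ [] = σ := rfl

lemma stackRun_cons (σ : List ℕ) (x : ℕ) (xs : List ℕ) :
    stackRun σ (x :: xs) =
      σ.takeWhile (· < x) ++ stackRun (x :: σ.dropWhile (· < x)) xs := by
  simp [stackRun, stackPop_eq]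

lemma stackRun_perm (w : List ℕ) : ∀ σ : List ℕ, (stackRun σ w).Perm (σ ++ w) := by
  induction w with
  | nil => intro σ; simp [stackRun_nil]
  | cons x xs ih =>
    intro σ
    rw [stackRun_cons]
    refine ((ih _).append_left _).trans ?_
    have h1 : ((x :: σ.dropWhile (· < x)) ++ xs) = (x :: (σ.dropWhile (· < x) ++ xs)) := rfl
    rw [h1]
    refine ((List.perm_middle.symm).append_left _).trans ?_
    rw [← List.append_assoc, List.takeWhile_append_dropWhile]

def Trip (w : List ℕ) : Prop := ∃ b x a : ℕ, List.Sublist [b, x, a] w ∧ a < b ∧ b < x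

def Pear (c : ℕ) (w : List ℕ) : Prop := ∃ x a : ℕ, List.Sublist [x, a] w ∧ a < c ∧ c < x

def Good (σ w : List ℕ) : Prop := (¬ Trip w) ∧ ∀ c ∈ σ, ¬ Pear c w

lemma contains231_iff (w : List ℕ) : Contains231 w ↔ Trip w := by
  constructor
  · rintro ⟨i, j, k, hij, hjk, h1, h2⟩
    refine ⟨w.get i, w.get j, w.get k, ?_, h1, h2⟩
    have : List.Sublist (List.map w.get [i, j, k]) w := by
      apply List.map_getElem_sublist
      simp [List.pairwise_cons, hij, hjk, hij.trans hjk]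
    simpa using this
  · rintro ⟨b, x, a, hs, h1, h2⟩
    obtain ⟨is, his, hp⟩ := List.sublist_eq_map_getElem hs
    match is, his with
    | [i, j, k], his =>
      simp only [List.map_cons, List.map_nil, List.cons.injEq] at his
      obtain ⟨hb, hx, ha, -⟩ := his
      simp only [List.pairwise_cons] at hp
      refine ⟨i, j, k, ?_, ?_, ?_, ?_⟩
      · exact hp.1 j (by simp)
      · exact hp.2.1 k (by simp)
      · rw [hb, ha] at h1; exact h1
      · rw [hb, hx] at h2; exact h2

lemma mem_take_lt {σ : List ℕ} {x e : ℕ} (he : e ∈ σ.takeWhile (· < x)) : e < x := by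
  have := List.mem_takeWhile_imp he
  simpa using this

lemma mem_drop_le {σ : List ℕ} {x e : ℕ} (hσ : σ.Pairwise (· < ·))
    (he : e ∈ σ.dropWhile (· < x)) : x ≤ e := by
  induction σ with
  | nil => simp at he
  | cons t ts ih =>
    rw [List.dropWhile_cons] at he
    by_cases h : t < x
    · simp only [h, decide_true, if_true] at he
      exact ih (List.pairwise_cons.mp hσ).2 he
    · simp only [h, decide_false, if_false] at he
      rcases List.mem_cons.mp he with rfl | he
      · omega
      · have := (List.pairwise_cons.mp hσ).1 e he
        omega

lemma sorted_cons_drop {σ : List ℕ} {x : ℕ} (hσ : σ.Pairwise (· < ·)) (hx : x ∉ σ) :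
    (x :: σ.dropWhile (· < x)).Pairwise (· < ·) := by
  rw [List.pairwise_cons]
  constructor
  · intro e he
    have h1 : x ≤ e := mem_drop_le hσ he
    have h2 : e ∈ σ := (List.dropWhile_sublist _).subset he
    have : x ≠ e := fun h => hx (h ▸ h2)
    omega
  · exact hσ.sublist (List.dropWhile_sublist _)

lemma good_step {σ : List ℕ} {x : ℕ} {xs : List ℕ} (hg : Good σ (x :: xs)) :
    Good (x :: σ.dropWhile (· < x)) xs := by
  obtain ⟨h1, h2⟩ := hg
  constructor
  · rintro ⟨b, y, a, hs, ha, hb⟩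
    exact h1 ⟨b, y, a, hs.cons x, ha, hb⟩
  · rintro c hc ⟨y, a, hs, ha, hb⟩
    rcases List.mem_cons.mp hc with rfl | hc
    · exact h1 ⟨c, y, a, hs.cons₂ c, ha, hb⟩
    · exact h2 c ((List.dropWhile_sublist _).subset hc) ⟨y, a, hs.cons x, ha, hb⟩

lemma nodup_step {σ : List ℕ} {x : ℕ} {xs : List ℕ} (h : (σ ++ x :: xs).Nodup) :
    ((x :: σ.dropWhile (· < x)) ++ xs).Nodup := by
  have hp : (σ ++ x :: xs).Perm (x :: (σ ++ xs)) := List.perm_middle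
  have h' : (x :: (σ ++ xs)).Nodup := hp.nodup h
  rw [List.nodup_cons] at h'
  have hsub : (σ.dropWhile (· < x) ++ xs).Sublist (σ ++ xs) :=
    (List.dropWhile_sublist _).append_right xs
  show (x :: (σ.dropWhile (· < x) ++ xs)).Nodup
  rw [List.nodup_cons]
  exact ⟨fun hm => h'.1 (hsub.subset hm), h'.2.sublist hsub⟩

lemma x_not_mem {σ : List ℕ} {x : ℕ} {xs : List ℕ} (h : (σ ++ x :: xs).Nodup) : x ∉ σ := by
  have hp : (σ ++ x :: xs).Perm (x :: (σ ++ xs)) := List.perm_middle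
  have h' := hp.nodup h
  rw [List.nodup_cons] at h'
  exact fun hm => h'.1 (List.mem_append_left _ hm)

lemma dirA : ∀ (w σ : List ℕ), σ.Pairwise (· < ·) → (σ ++ w).Nodup → Good σ w →
    (stackRun σ w).Pairwise (· < ·) := by
  intro w
  induction w with
  | nil => intro σ hσ _ _; simpa [stackRun_nil] using hσ
  | cons x xs ih =>
    intro σ hσ hnd hg
    rw [stackRun_cons]
    set t := σ.takeWhile (· < x) with ht
    set d := σ.dropWhile (· < x) with hd
    have hx : x ∉ σ := x_not_mem hnd
    have hsd : (x :: d).Pairwise (· < ·) := sorted_cons_drop hσ hx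
    have hrec : (stackRun (x :: d) xs).Pairwise (· < ·) :=
      ih _ hsd (nodup_step hnd) (good_step hg)
    rw [List.pairwise_append]
    refine ⟨hσ.sublist (List.takeWhile_sublist _), hrec, ?_⟩
    intro a hat b hbr
    have hax : a < x := mem_take_lt hat
    have haσ : a ∈ σ := (List.takeWhile_sublist _).subset hat
    have hbm : b ∈ (x :: d) ++ xs := (stackRun_perm xs (x :: d)).subset hbr
    rcases List.mem_append.mp hbm with hb1 | hb2
    · rcases List.mem_cons.mp hb1 with rfl | hbd
      · exact hax
      · -- a ∈ takeWhile, b ∈ dropWhile : use sortedness of σ = t ++ d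
        have : List.Pairwise (· < ·) (t ++ d) := by
          rw [ht, hd, List.takeWhile_append_dropWhile]; exact hσ
        exact (List.pairwise_append.mp this).2.2 a hat b hbd
    · -- b ∈ xs
      by_contra hab
      push_neg at hab
      have hne : b ≠ a := by
        intro h
        subst h
        have := List.disjoint_of_nodup_append hnd haσ
        exact this (List.mem_cons_of_mem _ hb2)
      have hba : b < a := lt_of_le_of_ne hab hne
      exact hg.2 a haσ ⟨x, b, (List.singleton_sublist.mpr hb2).cons₂ x, hba, hax⟩

lemma dirB : ∀ (w σ : List ℕ), σ.Pairwise (· < ·) → (σ ++ w).Nodup →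
    (stackRun σ w).Pairwise (· < ·) → Good σ w := by
  intro w
  induction w with
  | nil =>
    intro σ _ _ _
    constructor
    · rintro ⟨b, y, a, hs, -, -⟩
      simp at hs
    · rintro c - ⟨y, a, hs, -, -⟩
      simp at hs
  | cons x xs ih =>
    intro σ hσ hnd hs
    rw [stackRun_cons] at hs
    set t := σ.takeWhile (· < x) with ht
    set d := σ.dropWhile (· < x) with hd
    have hx : x ∉ σ := x_not_mem hnd
    have hsd : (x :: d).Pairwise (· < ·) := sorted_cons_drop hσ hx
    have hrec : (stackRun (x :: d) xs).Pairwise (· < ·) :=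
      hs.sublist (List.sublist_append_right t _)
    have IH : Good (x :: d) xs := ih _ hsd (nodup_step hnd) hrec
    -- the cross condition of the sorted append
    have hcross : ∀ c ∈ t, ∀ b ∈ stackRun (x :: d) xs, c < b :=
      fun c hc b hb => (List.pairwise_append.mp hs).2.2 c hc b hb
    have hmem : ∀ c ∈ σ, c ∈ t ∨ c ∈ d := by
      intro c hc
      rw [← (List.takeWhile_append_dropWhile : t ++ d = σ), List.mem_append] at hc
      exact hc
    have hcontra : ∀ c ∈ t, ∀ a ∈ xs, a < c → False := by
      intro c hc a ha hac
      have har : a ∈ stackRun (x :: d) xs := by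
        refine (stackRun_perm xs (x :: d)).symm.subset ?_
        exact List.mem_append_right _ ha
      have := hcross c hc a har
      omega
    constructor
    · rintro ⟨b, y, a, hsub, ha, hb⟩
      cases hsub with
      | cons _ h => exact IH.1 ⟨b, y, a, h, ha, hb⟩
      | cons_cons _ h => exact IH.2 x List.mem_cons_self ⟨y, a, h, ha, hb⟩
    · rintro c hc ⟨y, a, hsub, ha, hb⟩
      cases hsub with
      | cons _ h =>
        rcases hmem c hc with hct | hcd
        · have haxs : a ∈ xs := h.subset (by simp)
          exact hcontra c hct a haxs ha
        · exact IH.2 c (List.mem_cons_of_mem _ hcd) ⟨y, a, h, ha, hb⟩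
      | cons_cons _ h =>
        -- y = x, so c < x, hence c ∈ t
        rcases hmem c hc with hct | hcd
        · have haxs : a ∈ xs := h.subset (by simp)
          exact hcontra c hct a haxs ha
        · have := mem_drop_le hσ hcd
          omega


/-- a permutation is stack-sortable iff it avoids 231. -/
theorem stackSortable_iff_avoids_231 (n : ℕ) (w : List ℕ) (hw : IsPermOf w n) :
    S w = idPerm n ↔ ¬ Contains231 w := by
  have hnd : w.Nodup := hw.nodup_iff.mpr (List.nodup_range' (s := 1) (n := n))
  have hperm : (S w).Perm (List.range' 1 n) := (stackRun_perm w []).trans hw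
  rw [contains231_iff]
  have hid : (idPerm n).Pairwise (· < ·) := List.pairwise_lt_range' (s := 1) (n := n)
  constructor
  · intro h
    have hsorted : (stackRun [] w).Pairwise (· < ·) := by
      show (S w).Pairwise (· < ·)
      rw [h]; exact hid
    exact (dirB w [] List.Pairwise.nil (by simpa using hnd) hsorted).1
  · intro h
    have hg : Good [] w := ⟨h, by simp⟩
    have hsorted : (S w).Pairwise (· < ·) :=
      dirA w [] List.Pairwise.nil (by simpa using hnd) hg
    exact List.Perm.eq_of_pairwise' (hsorted.imp le_of_lt) (hid.imp le_of_lt) hperm
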